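/- One-step total variation estimate: for every n = 0,…,M, the solution of the scheme satisfies |u^{n+1}|_{BV} ≤ |uⁿ|_{BV} + |u₀^{n+1} − u₀ⁿ| + |u_N^{n+1} − u_Nⁿ| + 3·γ·Δt·‖uⁿ‖_∞. -/

import Mathlib

lemma slope_eq_deriv' {f : ℝ → ℝ} (hf : ContDiff ℝ 1 f) {x y : ℝ} (hxy : x ≠ y) :
    ∃ c, deriv f c = (f y - f x) / (y - x) := by
  rcases lt_or_gt_of_ne hxy with h | h
  · obtain ⟨c, _, hc⟩ := exists_deriv_eq_slope f h (hf.continuous.continuousOn)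
      ((hf.differentiable one_ne_zero).differentiableOn)
    exact ⟨c, hc⟩
  · obtain ⟨c, _, hc⟩ := exists_deriv_eq_slope f h (hf.continuous.continuousOn)
      ((hf.differentiable one_ne_zero).differentiableOn)
    refine ⟨c, ?_⟩
    rw [hc, ← neg_sub (f y), ← neg_sub y, neg_div_neg_eq]

lemma slope_decomp (lam : ℝ)
    (F₁ F₂ : ℝ → ℝ) (hF₁ : ContDiff ℝ 1 F₁) (hF₂ : ContDiff ℝ 1 F₂)
    (hmono₁ : ∀ w, 0 ≤ deriv F₁ w) (hmono₂ : ∀ w, deriv F₂ w ≤ 0)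
    (hCFL : ∀ w, lam * (deriv F₁ w - deriv F₂ w) ≤ 1)
    (x y : ℝ) :
    ∃ a b : ℝ, 0 ≤ a ∧ 0 ≤ b ∧ lam * (a + b) ≤ 1 ∧
      F₁ y - F₁ x = a * (y - x) ∧ F₂ y - F₂ x = -(b * (y - x)) := by
  by_cases hxy : x = y
  · subst hxy
    refine ⟨deriv F₁ x, -deriv F₂ x, hmono₁ x, by linarith [hmono₂ x], ?_, by ring, by ring⟩
    have := hCFL x; linarith [this]
  · have hne : y - x ≠ 0 := sub_ne_zero.mpr (Ne.symm hxy)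
    obtain ⟨c₁, h₁⟩ := slope_eq_deriv' hF₁ hxy
    obtain ⟨c₂, h₂⟩ := slope_eq_deriv' hF₂ hxy
    obtain ⟨c₃, h₃⟩ := slope_eq_deriv' (hF₁.sub hF₂) hxy
    refine ⟨(F₁ y - F₁ x) / (y - x), -((F₂ y - F₂ x) / (y - x)), ?_, ?_, ?_, ?_, ?_⟩
    · rw [← h₁]; exact hmono₁ c₁
    · rw [← h₂]; simpa using hmono₂ c₂
    · have hd : deriv (fun w => F₁ w - F₂ w) c₃ = deriv F₁ c₃ - deriv F₂ c₃ :=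
        deriv_fun_sub ((hF₁.differentiable one_ne_zero) c₃) ((hF₂.differentiable one_ne_zero) c₃)
      have hsum : (F₁ y - F₁ x) / (y - x) + -((F₂ y - F₂ x) / (y - x))
          = deriv F₁ c₃ - deriv F₂ c₃ := by
        rw [← hd, h₃]; field_simp; ring
      rw [hsum]; exact hCFL c₃
    · field_simp
    · field_simp

lemma abs_add₄' (A B C D : ℝ) : |A + B + C + D| ≤ |A| + |B| + |C| + |D| := by
  calc |A + B + C + D| ≤ |A + B + C| + |D| := abs_add_le _ _
    _ ≤ |A| + |B| + |C| + |D| := by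
        have h1 := abs_add_le (A + B) C
        have h2 := abs_add_le A B
        linarith

lemma est4' (c₁ c₂ c₃ c₄ d₁ d₂ d₃ d₄ : ℝ)
    (h₁ : 0 ≤ c₁) (h₂ : 0 ≤ c₂) (h₃ : 0 ≤ c₃) (h₄ : 0 ≤ c₄) :
    |c₁ * d₁ + c₂ * d₂ + c₃ * d₃ + c₄ * d₄|
      ≤ c₁ * |d₁| + c₂ * |d₂| + c₃ * |d₃| + c₄ * |d₄| := by
  have := abs_add₄' (c₁ * d₁) (c₂ * d₂) (c₃ * d₃) (c₄ * d₄)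
  simp only [abs_mul, abs_of_nonneg h₁, abs_of_nonneg h₂, abs_of_nonneg h₃,
    abs_of_nonneg h₄] at this
  exact this

set_option maxHeartbeats 1000000 in
/-- One-step total variation estimate: for every `n ≤ M`, the solution of the
scheme satisfies
`|u^{n+1}|_{BV} ≤ |uⁿ|_{BV} + |u₀^{n+1} - u₀ⁿ| + |u_N^{n+1} - u_Nⁿ| + 3 γ Δt ‖uⁿ‖_∞`. -/
theorem stmt_4 (N M : ℕ) (hN : 3 ≤ N) (T γ Δx Δt lam : ℝ)
    (hT : 0 < T) (hγ : 0 < γ)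
    (hΔx : Δx = 1 / N) (hΔt : Δt = T / (M + 1)) (hlam : lam = Δt / Δx)
    (F₁ F₂ : ℝ → ℝ) (hF₁ : ContDiff ℝ 1 F₁) (hF₂ : ContDiff ℝ 1 F₂)
    (hmono₁ : ∀ w, 0 ≤ deriv F₁ w) (hmono₂ : ∀ w, deriv F₂ w ≤ 0)
    (hCFL : ∀ w, lam * (deriv F₁ w - deriv F₂ w) ≤ 1)
    (u : ℕ → ℕ → ℝ) (P : ℕ → ℕ → ℝ)
    (hP : ∀ n j, P n j = Δx * (u n 0 / 2 + ∑ i ∈ Finset.Ico 1 j, u n i + u n j / 2))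
    (hscheme : ∀ n, n ≤ M → ∀ j, 1 ≤ j → j ≤ N - 1 →
      u (n + 1) j = u n j
        - lam * ((F₁ (u n j) + F₂ (u n (j + 1))) - (F₁ (u n (j - 1)) + F₂ (u n j)))
        + γ * Δt * P n j) :
    ∀ n, n ≤ M →
      ∑ j ∈ Finset.range N, |u (n + 1) (j + 1) - u (n + 1) j|
        ≤ (∑ j ∈ Finset.range N, |u n (j + 1) - u n j|)
          + |u (n + 1) 0 - u n 0| + |u (n + 1) N - u n N|
          + 3 * γ * Δt *
            (Finset.range (N + 1)).sup' Finset.nonempty_range_add_one (fun j => |u n j|) := by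
  obtain ⟨k, rfl⟩ : ∃ k, N = k + 2 := ⟨N - 2, by omega⟩
  have hk : 1 ≤ k := by omega
  intro n hn
  have hΔxpos : 0 < Δx := by
    rw [hΔx]; push_cast; positivity
  have hΔtpos : 0 < Δt := by
    rw [hΔt]; positivity
  have hlampos : 0 < lam := by
    rw [hlam]; exact div_pos hΔtpos hΔxpos
  have hγΔt : 0 ≤ γ * Δt := by positivity
  set K := (Finset.range (k + 2 + 1)).sup' Finset.nonempty_range_add_one (fun j => |u n j|)
    with hKdef
  have hK : ∀ j, j ≤ k + 2 → |u n j| ≤ K := fun j hj =>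
    Finset.le_sup' (fun j => |u n j|) (Finset.mem_range.mpr (by omega))
  have hK0 : 0 ≤ K := le_trans (abs_nonneg _) (hK 0 (by omega))
  -- bounds on the source term
  have hPub : ∀ j, j ≤ k + 2 → |P n j| ≤ K := by
    intro j hj
    have hsum : |∑ i ∈ Finset.Ico 1 j, u n i| ≤ ((j - 1 : ℕ) : ℝ) * K := by
      calc |∑ i ∈ Finset.Ico 1 j, u n i| ≤ ∑ i ∈ Finset.Ico 1 j, |u n i| :=
            Finset.abs_sum_le_sum_abs _ _
        _ ≤ ∑ i ∈ Finset.Ico 1 j, K := Finset.sum_le_sum (fun i hi => by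
            have := Finset.mem_Ico.mp hi; exact hK i (by omega))
        _ = ((j - 1 : ℕ) : ℝ) * K := by
            rw [Finset.sum_const, Nat.card_Ico, nsmul_eq_mul]
    have h0 := hK 0 (by omega)
    have hjK := hK j hj
    have habs : |u n 0 / 2 + ∑ i ∈ Finset.Ico 1 j, u n i + u n j / 2|
        ≤ K / 2 + ((j - 1 : ℕ) : ℝ) * K + K / 2 := by
      have t1 := abs_add_le (u n 0 / 2 + ∑ i ∈ Finset.Ico 1 j, u n i) (u n j / 2)
      have t2 := abs_add_le (u n 0 / 2) (∑ i ∈ Finset.Ico 1 j, u n i)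
      have e1 : |u n 0 / 2| = |u n 0| / 2 := by rw [abs_div, abs_two]
      have e2 : |u n j / 2| = |u n j| / 2 := by rw [abs_div, abs_two]
      rw [e1] at t2; rw [e2] at t1
      linarith
    have hcast : ((j - 1 : ℕ) : ℝ) ≤ (k : ℝ) + 1 := by
      have : ((j - 1 : ℕ) : ℝ) ≤ ((k + 1 : ℕ) : ℝ) := Nat.cast_le.mpr (by omega)
      push_cast at this; linarith
    have hΔxval : Δx * ((k : ℝ) + 2) = 1 := by
      rw [hΔx]; push_cast; field_simp
    rw [hP, abs_mul, abs_of_pos hΔxpos]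
    set c := ((j - 1 : ℕ) : ℝ)
    have h1 : K / 2 + c * K + K / 2 ≤ ((k : ℝ) + 2) * K := by nlinarith
    calc Δx * |u n 0 / 2 + ∑ i ∈ Finset.Ico 1 j, u n i + u n j / 2|
        ≤ Δx * (((k : ℝ) + 2) * K) := by
          apply mul_le_mul_of_nonneg_left _ hΔxpos.le
          linarith
      _ = K := by rw [← mul_assoc, hΔxval, one_mul]
  have hPdiff : ∀ j, 1 ≤ j → j + 1 ≤ k + 2 → |P n (j + 1) - P n j| ≤ Δx * K := by
    intro j hj1 hj2
    have hstep : P n (j + 1) - P n j = Δx * (u n j / 2 + u n (j + 1) / 2) := by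
      rw [hP, hP, Finset.sum_Ico_succ_top (by omega : 1 ≤ j)]; ring
    rw [hstep, abs_mul, abs_of_pos hΔxpos]
    apply mul_le_mul_of_nonneg_left _ hΔxpos.le
    have t1 := abs_add_le (u n j / 2) (u n (j + 1) / 2)
    have e1 : |u n j / 2| = |u n j| / 2 := by rw [abs_div, abs_two]
    have e2 : |u n (j + 1) / 2| = |u n (j + 1)| / 2 := by rw [abs_div, abs_two]
    have := hK j (by omega); have := hK (j + 1) (by omega)
    rw [e1, e2] at t1; linarith
  -- slope decompositions
  choose a b ha hb hab hA hB using fun j =>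
    slope_decomp lam F₁ F₂ hF₁ hF₂ hmono₁ hmono₂ hCFL (u n j) (u n (j + 1))
  -- auxiliary telescoping functions
  set X : ℕ → ℝ := fun j => if 1 ≤ j ∧ j ≤ k + 1
      then lam * a (j - 1) * |u n j - u n (j - 1)| else 0 with hXdef
  set Y : ℕ → ℝ := fun j => if 1 ≤ j ∧ j ≤ k + 1
      then lam * b j * |u n (j + 1) - u n j| else 0 with hYdef
  set S : ℕ → ℝ := fun j => if j = 0 then |u (n + 1) 0 - u n 0| + γ * Δt * K
      else if j = k + 1 then |u (n + 1) (k + 2) - u n (k + 2)| + γ * Δt * K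
      else γ * Δt * (Δx * K) with hSdef
  have hX0 : X 0 = 0 := by simp [hXdef]
  have hXtop : X (k + 2) = 0 := by simp only [hXdef]; rw [if_neg (by omega)]
  have hY0 : Y 0 = 0 := by simp [hYdef]
  have hYtop : Y (k + 2) = 0 := by simp only [hYdef]; rw [if_neg (by omega)]
  have hS0 : S 0 = |u (n + 1) 0 - u n 0| + γ * Δt * K := by simp [hSdef]
  have hStop : S (k + 1) = |u (n + 1) (k + 2) - u n (k + 2)| + γ * Δt * K := by
    simp only [hSdef]; rw [if_neg (by omega)]; simp
  have hSmid : ∀ m, m ≠ 0 → m ≠ k + 1 → S m = γ * Δt * (Δx * K) := by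
    intro m h1 h2; simp only [hSdef]; rw [if_neg h1, if_neg h2]
  -- the pointwise estimate
  have main : ∀ j ∈ Finset.range (k + 2), |u (n + 1) (j + 1) - u (n + 1) j|
      ≤ |u n (j + 1) - u n j| + (X j - X (j + 1)) + (Y (j + 1) - Y j) + S j := by
    intro j hj
    rw [Finset.mem_range] at hj
    by_cases hj0 : j = 0
    · subst hj0
      have h1 := hscheme n hn 1 (by omega) (by omega)
      simp only [show (1 : ℕ) + 1 = 2 from rfl, show (1 : ℕ) - 1 = 0 from rfl] at h1
      have hA0 := hA 0; have hB1 := hB 1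
      simp only [show (0 : ℕ) + 1 = 1 from rfl, show (1 : ℕ) + 1 = 2 from rfl] at hA0 hB1
      have hid : u (n + 1) 1 - u (n + 1) 0
          = (1 - lam * a 0) * (u n 1 - u n 0) + (lam * b 1) * (u n 2 - u n 1)
            + 1 * (-(u (n + 1) 0 - u n 0)) + (γ * Δt) * P n 1 := by
        linear_combination h1 - lam * hA0 - lam * hB1
      have hc1 : 0 ≤ 1 - lam * a 0 := by
        have := hab 0
        have := mul_nonneg hlampos.le (hb 0)
        nlinarith
      have hX1 : X 1 = lam * a 0 * |u n 1 - u n 0| := by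
        simp only [hXdef]; rw [if_pos (by omega)]
      have hY1 : Y 1 = lam * b 1 * |u n 2 - u n 1| := by
        simp only [hYdef]; rw [if_pos (by omega)]
      have hPb := mul_le_mul_of_nonneg_left (hPub 1 (by omega)) hγΔt
      calc |u (n + 1) (0 + 1) - u (n + 1) 0|
          = |(1 - lam * a 0) * (u n 1 - u n 0) + (lam * b 1) * (u n 2 - u n 1)
              + 1 * (-(u (n + 1) 0 - u n 0)) + (γ * Δt) * P n 1| := by rw [← hid]
        _ ≤ (1 - lam * a 0) * |u n 1 - u n 0| + (lam * b 1) * |u n 2 - u n 1|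
              + 1 * |(-(u (n + 1) 0 - u n 0))| + (γ * Δt) * |P n 1| :=
            est4' _ _ _ _ _ _ _ _ hc1 (mul_nonneg hlampos.le (hb 1)) zero_le_one hγΔt
        _ ≤ |u n (0 + 1) - u n 0| + (X 0 - X 1) + (Y 1 - Y 0) + S 0 := by
            rw [hX0, hX1, hY0, hY1, hS0, abs_neg]
            have : (1 - lam * a 0) * |u n 1 - u n 0|
                = |u n 1 - u n 0| - lam * a 0 * |u n 1 - u n 0| := by ring
            linarith
    · obtain ⟨i, rfl⟩ : ∃ i, j = i + 1 := ⟨j - 1, by omega⟩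
      by_cases hik : i = k
      · subst hik
        have h1 := hscheme n hn (i + 1) (by omega) (by omega)
        simp only [show i + 1 + 1 = i + 2 from rfl, show i + 1 - 1 = i from rfl] at h1
        have hAk := hA i; have hBk1 := hB (i + 1)
        simp only [show i + 1 + 1 = i + 2 from rfl] at hBk1
        have hid : u (n + 1) (i + 2) - u (n + 1) (i + 1)
            = (1 - lam * b (i + 1)) * (u n (i + 2) - u n (i + 1))
              + (lam * a i) * (u n (i + 1) - u n i)
              + 1 * (u (n + 1) (i + 2) - u n (i + 2)) + (γ * Δt) * (-(P n (i + 1))) := by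
          linear_combination -h1 + lam * hAk + lam * hBk1
        have hc1 : 0 ≤ 1 - lam * b (i + 1) := by
          have := hab (i + 1)
          have := mul_nonneg hlampos.le (ha (i + 1))
          nlinarith
        have hXk1 : X (i + 1) = lam * a i * |u n (i + 1) - u n i| := by
          simp only [hXdef]; rw [if_pos (by omega)]; rfl
        have hXk2 : X (i + 2) = 0 := by simp only [hXdef]; rw [if_neg (by omega)]
        have hYk1 : Y (i + 1) = lam * b (i + 1) * |u n (i + 2) - u n (i + 1)| := by
          simp only [hYdef]; rw [if_pos (by omega)]
        have hYk2 : Y (i + 2) = 0 := by simp only [hYdef]; rw [if_neg (by omega)]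
        have hPb := mul_le_mul_of_nonneg_left (hPub (i + 1) (by omega)) hγΔt
        have hSk1 : S (i + 1) = |u (n + 1) (i + 2) - u n (i + 2)| + γ * Δt * K := by
          simp only [hSdef]; rw [if_neg (by omega)]; simp
        calc |u (n + 1) (i + 1 + 1) - u (n + 1) (i + 1)|
            = |(1 - lam * b (i + 1)) * (u n (i + 2) - u n (i + 1))
                + (lam * a i) * (u n (i + 1) - u n i)
                + 1 * (u (n + 1) (i + 2) - u n (i + 2))
                + (γ * Δt) * (-(P n (i + 1)))| := by rw [← hid]
          _ ≤ (1 - lam * b (i + 1)) * |u n (i + 2) - u n (i + 1)|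
                + (lam * a i) * |u n (i + 1) - u n i|
                + 1 * |u (n + 1) (i + 2) - u n (i + 2)|
                + (γ * Δt) * |(-(P n (i + 1)))| :=
              est4' _ _ _ _ _ _ _ _ hc1 (mul_nonneg hlampos.le (ha i)) zero_le_one hγΔt
          _ ≤ |u n (i + 1 + 1) - u n (i + 1)| + (X (i + 1) - X (i + 1 + 1))
                + (Y (i + 1 + 1) - Y (i + 1)) + S (i + 1) := by
              rw [hXk1, hYk1, hSk1, abs_neg]
              rw [show i + 1 + 1 = i + 2 from rfl, hXk2, hYk2]
              have : (1 - lam * b (i + 1)) * |u n (i + 2) - u n (i + 1)|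
                  = |u n (i + 2) - u n (i + 1)|
                    - lam * b (i + 1) * |u n (i + 2) - u n (i + 1)| := by ring
              linarith
      · -- interior case : 1 ≤ i + 1 ≤ k
        have hik' : i + 1 ≤ k := by omega
        have h1 := hscheme n hn (i + 1) (by omega) (by omega)
        have h2 := hscheme n hn (i + 2) (by omega) (by omega)
        simp only [show i + 1 + 1 = i + 2 from rfl, show i + 1 - 1 = i from rfl,
          show i + 2 + 1 = i + 3 from rfl, show i + 2 - 1 = i + 1 from rfl] at h1 h2
        have hAi := hA i; have hAi1 := hA (i + 1); have hBi1 := hB (i + 1)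
        have hBi2 := hB (i + 2)
        simp only [show i + 1 + 1 = i + 2 from rfl, show i + 2 + 1 = i + 3 from rfl]
          at hAi1 hBi1 hBi2
        have hid : u (n + 1) (i + 2) - u (n + 1) (i + 1)
            = (1 - lam * a (i + 1) - lam * b (i + 1)) * (u n (i + 2) - u n (i + 1))
              + (lam * b (i + 2)) * (u n (i + 3) - u n (i + 2))
              + (lam * a i) * (u n (i + 1) - u n i)
              + (γ * Δt) * (P n (i + 2) - P n (i + 1)) := by
          linear_combination h2 - h1 - lam * hAi1 - lam * hBi2 + lam * hAi + lam * hBi1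
        have hc1 : 0 ≤ 1 - lam * a (i + 1) - lam * b (i + 1) := by
          have h3 := hab (i + 1)
          have : lam * (a (i + 1) + b (i + 1))
              = lam * a (i + 1) + lam * b (i + 1) := by ring
          linarith
        have hXi1 : X (i + 1) = lam * a i * |u n (i + 1) - u n i| := by
          simp only [hXdef]; rw [if_pos (by omega)]; rfl
        have hXi2 : X (i + 2) = lam * a (i + 1) * |u n (i + 2) - u n (i + 1)| := by
          simp only [hXdef]; rw [if_pos (by omega)]; rfl
        have hYi1 : Y (i + 1) = lam * b (i + 1) * |u n (i + 2) - u n (i + 1)| := by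
          simp only [hYdef]; rw [if_pos (by omega)]
        have hYi2 : Y (i + 2) = lam * b (i + 2) * |u n (i + 3) - u n (i + 2)| := by
          simp only [hYdef]; rw [if_pos (by omega)]
        have hSi : S (i + 1) = γ * Δt * (Δx * K) := hSmid (i + 1) (by omega) (by omega)
        have hPb := mul_le_mul_of_nonneg_left (hPdiff (i + 1) (by omega) (by omega)) hγΔt
        calc |u (n + 1) (i + 1 + 1) - u (n + 1) (i + 1)|
            = |(1 - lam * a (i + 1) - lam * b (i + 1)) * (u n (i + 2) - u n (i + 1))
                + (lam * b (i + 2)) * (u n (i + 3) - u n (i + 2))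
                + (lam * a i) * (u n (i + 1) - u n i)
                + (γ * Δt) * (P n (i + 2) - P n (i + 1))| := by rw [← hid]
          _ ≤ (1 - lam * a (i + 1) - lam * b (i + 1)) * |u n (i + 2) - u n (i + 1)|
                + (lam * b (i + 2)) * |u n (i + 3) - u n (i + 2)|
                + (lam * a i) * |u n (i + 1) - u n i|
                + (γ * Δt) * |P n (i + 2) - P n (i + 1)| :=
              est4' _ _ _ _ _ _ _ _ hc1 (mul_nonneg hlampos.le (hb (i + 2)))
                (mul_nonneg hlampos.le (ha i)) hγΔt
          _ ≤ |u n (i + 1 + 1) - u n (i + 1)| + (X (i + 1) - X (i + 1 + 1))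
                + (Y (i + 1 + 1) - Y (i + 1)) + S (i + 1) := by
              rw [show i + 1 + 1 = i + 2 from rfl, hXi1, hXi2, hYi1, hYi2, hSi]
              have : (1 - lam * a (i + 1) - lam * b (i + 1)) * |u n (i + 2) - u n (i + 1)|
                  = |u n (i + 2) - u n (i + 1)|
                    - lam * a (i + 1) * |u n (i + 2) - u n (i + 1)|
                    - lam * b (i + 1) * |u n (i + 2) - u n (i + 1)| := by ring
              linarith
  -- summation
  have hXsum : ∑ j ∈ Finset.range (k + 2), (X j - X (j + 1)) = X 0 - X (k + 2) :=
    Finset.sum_range_sub' X (k + 2)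
  have hYsum : ∑ j ∈ Finset.range (k + 2), (Y (j + 1) - Y j) = Y (k + 2) - Y 0 :=
    Finset.sum_range_sub Y (k + 2)
  have hSsum : ∑ j ∈ Finset.range (k + 2), S j
      ≤ |u (n + 1) 0 - u n 0| + |u (n + 1) (k + 2) - u n (k + 2)| + 3 * (γ * Δt * K) := by
    rw [Finset.sum_range_succ, Finset.sum_range_succ']
    have hmid : ∀ i ∈ Finset.range k, S (i + 1) = γ * Δt * (Δx * K) := fun i hi =>
      hSmid (i + 1) (by omega) (by rw [Finset.mem_range] at hi; omega)
    rw [Finset.sum_congr rfl hmid, Finset.sum_const, Finset.card_range, nsmul_eq_mul,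
      hS0, hStop]
    have hkx : (k : ℝ) * Δx ≤ 1 := by
      rw [hΔx, mul_one_div, div_le_one (by push_cast; positivity)]
      push_cast; linarith
    have h3 : γ * Δt * K * ((k : ℝ) * Δx) ≤ γ * Δt * K * 1 :=
      mul_le_mul_of_nonneg_left hkx (mul_nonneg hγΔt hK0)
    nlinarith [h3]
  calc ∑ j ∈ Finset.range (k + 2), |u (n + 1) (j + 1) - u (n + 1) j|
      ≤ ∑ j ∈ Finset.range (k + 2),
          (|u n (j + 1) - u n j| + (X j - X (j + 1)) + (Y (j + 1) - Y j) + S j) :=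
        Finset.sum_le_sum main
    _ = (∑ j ∈ Finset.range (k + 2), |u n (j + 1) - u n j|) + (X 0 - X (k + 2))
          + (Y (k + 2) - Y 0) + ∑ j ∈ Finset.range (k + 2), S j := by
        rw [Finset.sum_add_distrib, Finset.sum_add_distrib, Finset.sum_add_distrib,
          hXsum, hYsum]
    _ ≤ (∑ j ∈ Finset.range (k + 2), |u n (j + 1) - u n j|)
          + |u (n + 1) 0 - u n 0| + |u (n + 1) (k + 2) - u n (k + 2)|
          + 3 * γ * Δt * K := by
        rw [hX0, hXtop, hY0, hYtop]
        linarith
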